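/- (Theorem 1, modal covariance recursion.) Let (Ω, 𝓕, ℙ) be a probability space, r ∈ ℕ, and J = Fin (r+1). Let p : J → J → ℝ be row-stochastic (p i j ≥ 0, ∑_j p i j = 1) with stationary distribution π (π j > 0, ∑_j π j = 1, ∑_i π i · p i j = π j). Let θ₀, θ₁ : Ω → J be measurable with ℙ({θ₀ = i} ∩ {θ₁ = j}) = π i · p i j for all i, j. Let e : Ω → ℝⁿ, w : Ω → ℝ^{n_w}, v : Ω → ℝ^{m} be square-integrable random vectors such that the pair (w, v) is independent of (e, θ₀, θ₁), w and v are independent, 𝔼[w] = 0, 𝔼[v] = 0, 𝔼[w wᵀ] = W, 𝔼[v vᵀ] = V. For each i ∈ J let P_i = 𝔼[e eᵀ | θ₀ = i] denote the conditional second-moment matrix, and assume 𝔼[e eᵀ | θ₀ = i, θ₁ = j] = P_i for all i, j (the previous error's conditional second moment does not depend on the next chain state). Given real matrices Ā (n×n), B̄ (n×n_w), and for each j ∈ J matrices F_j (n×n) and X_j (n×m), define the new error e' : Ω → ℝⁿ by e'(ω) = F_{θ₁(ω)} (Ā e(ω) + B̄ w(ω)) − X_{θ₁(ω)} v(ω).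 Then for every j ∈ J: 𝔼[e' e'ᵀ | θ₁ = j] = ∑_{i ∈ J} p i j · (π i / π j) · ( F_j (Ā P_i Āᵀ + B̄ W B̄ᵀ) F_jᵀ + X_j V X_jᵀ ). -/

import Mathlib

open MeasureTheory ProbabilityTheory Matrix

/-- The conditional second-moment matrix `𝔼[x xᵀ | E] = 𝔼[x xᵀ 1_E] / P(E)`. -/
noncomputable def condSecondMoment {Ω : Type*} [MeasurableSpace Ω] (P : Measure Ω)
    (E : Set Ω) {n : ℕ} (x : Ω → Fin n → ℝ) : Matrix (Fin n) (Fin n) ℝ :=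
  Matrix.of fun a b => (∫ ω in E, x ω a * x ω b ∂P) / (P E).toReal


lemma l2_mul_integrable {Ω : Type*} [MeasurableSpace Ω] {P : MeasureTheory.Measure Ω}
    {f g : Ω → ℝ} (hf : MeasureTheory.MemLp f 2 P) (hg : MeasureTheory.MemLp g 2 P) :
    MeasureTheory.Integrable (fun ω => f ω * g ω) P := by
  have hpqr : (1 : ENNReal) / 1 = 1 / 2 + 1 / 2 := by
    rw [ENNReal.add_halves, one_div_one]
  have h : MeasureTheory.MemLp (f • g) 1 P := MeasureTheory.MemLp.smul (r := 1) hg hf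
  rw [MeasureTheory.memLp_one_iff_integrable] at h
  exact h

lemma setIntegral_bilin {Ω : Type*} [MeasurableSpace Ω] {P : MeasureTheory.Measure Ω}
    {ι : Type*} [Fintype ι] {S : Set Ω}
    (c d : ι → ℝ) (z : ι → Ω → ℝ)
    (hint : ∀ k l : ι, MeasureTheory.IntegrableOn (fun ω => z k ω * z l ω) S P) :
    ∫ ω in S, (∑ k, c k * z k ω) * (∑ l, d l * z l ω) ∂P
      = ∑ k, ∑ l, c k * d l * ∫ ω in S, z k ω * z l ω ∂P := by
  have h : ∀ ω, (∑ k, c k * z k ω) * (∑ l, d l * z l ω)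
      = ∑ k, ∑ l, c k * d l * (z k ω * z l ω) := by
    intro ω
    rw [Finset.sum_mul_sum]
    exact Finset.sum_congr rfl fun k _ => Finset.sum_congr rfl fun l _ => by ring
  simp_rw [h]
  rw [MeasureTheory.integral_finset_sum]
  · refine Finset.sum_congr rfl fun k _ => ?_
    rw [MeasureTheory.integral_finset_sum]
    · exact Finset.sum_congr rfl fun l _ => MeasureTheory.integral_const_mul _ _
    · intro l _
      exact (hint k l).const_mul _
  · intro k _
    exact MeasureTheory.integrable_finset_sum _ fun l _ => (hint k l).const_mul _

lemma quad_apply {n k : ℕ} (A B : Matrix (Fin n) (Fin k) ℝ) (M : Matrix (Fin k) (Fin k) ℝ)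
    (a b : Fin n) :
    ∑ c, ∑ d, A a c * B b d * M c d = (A * M * Bᵀ) a b := by
  simp only [Matrix.mul_apply, Matrix.transpose_apply, Finset.sum_mul]
  rw [Finset.sum_comm]
  exact Finset.sum_congr rfl fun d _ => Finset.sum_congr rfl fun c _ => by ring

/-- Theorem 1 of the paper (modal covariance recursion): for the jump-filter error
`e' = F_{θ₁} (Ā e + B̄ w) − X_{θ₁} v` driven by a stationary Markov chain `(θ₀, θ₁)` with
transition matrix `p` and stationary distribution `π`, the modal second moments satisfy
`𝔼[e' e'ᵀ | θ₁ = j] = ∑ i, p i j (π i / π j) (F_j (Ā P_i Āᵀ + B̄ W B̄ᵀ) F_jᵀ + X_j V X_jᵀ)`. -/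
theorem stmt_8 {Ω : Type*} [MeasurableSpace Ω] (P : Measure Ω) [IsProbabilityMeasure P]
    (r n nw m : ℕ)
    (p : Fin (r + 1) → Fin (r + 1) → ℝ) (π : Fin (r + 1) → ℝ)
    (hp0 : ∀ i j, 0 ≤ p i j) (hp1 : ∀ i, ∑ j, p i j = 1)
    (hπpos : ∀ j, 0 < π j) (hπ1 : ∑ j, π j = 1)
    (hstat : ∀ j, ∑ i, π i * p i j = π j)
    (θ₀ θ₁ : Ω → Fin (r + 1)) (hθ₀ : Measurable θ₀) (hθ₁ : Measurable θ₁)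
    (hjoint : ∀ i j, (P ({ω | θ₀ ω = i} ∩ {ω | θ₁ ω = j})).toReal = π i * p i j)
    (e : Ω → Fin n → ℝ) (w : Ω → Fin nw → ℝ) (v : Ω → Fin m → ℝ)
    (he2 : ∀ i, MemLp (fun ω => e ω i) 2 P)
    (hw2 : ∀ i, MemLp (fun ω => w ω i) 2 P)
    (hv2 : ∀ i, MemLp (fun ω => v ω i) 2 P)
    (hindep : IndepFun (fun ω => (w ω, v ω)) (fun ω => (e ω, θ₀ ω, θ₁ ω)) P)
    (hwv : IndepFun w v P)
    (hwmean : ∀ i, ∫ ω, w ω i ∂P = 0)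
    (hvmean : ∀ i, ∫ ω, v ω i ∂P = 0)
    (Wm : Matrix (Fin nw) (Fin nw) ℝ)
    (hWm : Wm = Matrix.of fun a b => ∫ ω, w ω a * w ω b ∂P)
    (Vm : Matrix (Fin m) (Fin m) ℝ)
    (hVm : Vm = Matrix.of fun a b => ∫ ω, v ω a * v ω b ∂P)
    (Pmat : Fin (r + 1) → Matrix (Fin n) (Fin n) ℝ)
    (hPmat : ∀ i, Pmat i = condSecondMoment P {ω | θ₀ ω = i} e)
    (hPmat' : ∀ i j, 0 < P ({ω | θ₀ ω = i} ∩ {ω | θ₁ ω = j}) →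
      condSecondMoment P ({ω | θ₀ ω = i} ∩ {ω | θ₁ ω = j}) e = Pmat i)
    (Abar : Matrix (Fin n) (Fin n) ℝ) (Bbar : Matrix (Fin n) (Fin nw) ℝ)
    (F : Fin (r + 1) → Matrix (Fin n) (Fin n) ℝ)
    (X : Fin (r + 1) → Matrix (Fin n) (Fin m) ℝ)
    (e' : Ω → Fin n → ℝ)
    (he' : ∀ ω, e' ω =
      (F (θ₁ ω)).mulVec (Abar.mulVec (e ω) + Bbar.mulVec (w ω))
        - (X (θ₁ ω)).mulVec (v ω))
    (j : Fin (r + 1)) :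
    condSecondMoment P {ω | θ₁ ω = j} e' =
      ∑ i, (p i j * (π i / π j)) •
        (F j * (Abar * Pmat i * Abarᵀ + Bbar * Wm * Bbarᵀ) * (F j)ᵀ
          + X j * Vm * (X j)ᵀ) := by
    classical
  have hπj := hπpos j
  have hSm : MeasurableSet {ω | θ₁ ω = j} := hθ₁ (measurableSet_singleton j)
  have hTm : ∀ i : Fin (r+1), MeasurableSet ({ω | θ₀ ω = i} ∩ {ω | θ₁ ω = j}) :=
    fun i => (hθ₀ (measurableSet_singleton i)).inter hSm
  have hUnion : {ω | θ₁ ω = j}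
      = ⋃ i ∈ (Finset.univ : Finset (Fin (r+1))), ({ω | θ₀ ω = i} ∩ {ω | θ₁ ω = j}) := by
    ext ω
    simp only [Set.mem_setOf_eq, Set.mem_iUnion, Set.mem_inter_iff, Finset.mem_univ,
      exists_prop, true_and]
    exact ⟨fun h => ⟨θ₀ ω, rfl, h⟩, fun ⟨i, _, h⟩ => h⟩
  have hdisj : ((Finset.univ : Finset (Fin (r+1))) : Set (Fin (r+1))).PairwiseDisjoint
      (fun i => {ω | θ₀ ω = i} ∩ {ω | θ₁ ω = j}) := by
    intro i₁ _ i₂ _ hne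
    refine Set.disjoint_left.2 fun ω hω₁ hω₂ => hne ?_
    have h1 : θ₀ ω = i₁ := hω₁.1
    have h2 : θ₀ ω = i₂ := hω₂.1
    rw [← h1, ← h2]
  have hPS : (P {ω | θ₁ ω = j}).toReal = π j := by
    rw [hUnion, measure_biUnion_finset hdisj (fun i _ => hTm i),
      ENNReal.toReal_sum (fun i _ => measure_ne_top P _)]
    simp_rw [hjoint]
    exact hstat j
  -- indicator of the event
  set χ : Ω → ℝ := Set.indicator {ω | θ₁ ω = j} (fun _ => (1:ℝ)) with hχdef
  have hχmeas : Measurable χ := measurable_const.indicator hSm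
  have hAESχ : AEStronglyMeasurable χ P := hχmeas.aestronglyMeasurable
  have hχint : ∀ (f : Ω → ℝ), (∫ ω in {ω | θ₁ ω = j}, f ω ∂P) = ∫ ω, f ω * χ ω ∂P := by
    intro f
    rw [← integral_indicator hSm]
    congr 1
    funext ω
    by_cases h : ω ∈ {ω | θ₁ ω = j}
    · simp [hχdef, Set.indicator_of_mem h]
    · simp [hχdef, Set.indicator_of_notMem h]
  have hχ1 : ∫ ω, χ ω ∂P = (P {ω | θ₁ ω = j}).toReal := integral_indicator_one hSm
  set χfun : (Fin n → ℝ) × Fin (r+1) × Fin (r+1) → ℝ :=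
    fun t => if t.2.2 = j then 1 else 0 with hχfdef
  have hχfun_meas : Measurable χfun := by
    refine Measurable.ite ?_ measurable_const measurable_const
    exact (measurable_snd.comp measurable_snd) (measurableSet_singleton j)
  have hχcomp : ∀ ω, χ ω = χfun (e ω, θ₀ ω, θ₁ ω) := by
    intro ω
    by_cases h : θ₁ ω = j
    · simp [hχdef, hχfdef, Set.indicator_of_mem h, h]
    · simp [hχdef, hχfdef, Set.indicator_of_notMem h, h]
  have hχcomp' : (χfun ∘ fun ω => (e ω, θ₀ ω, θ₁ ω)) = χ :=
    funext fun ω => (hχcomp ω).symm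
  -- the modal second moments of e
  have hIee : ∀ c d, ∫ ω in {ω | θ₁ ω = j}, e ω c * e ω d ∂P
      = (∑ i, (π i * p i j) • Pmat i) c d := by
    intro c d
    have hint : ∀ i ∈ (Finset.univ : Finset (Fin (r+1))),
        IntegrableOn (fun ω => e ω c * e ω d) ({ω | θ₀ ω = i} ∩ {ω | θ₁ ω = j}) P :=
      fun i _ => (l2_mul_integrable (he2 c) (he2 d)).integrableOn
    rw [hUnion, integral_biUnion_finset _ (fun i _ => hTm i) hdisj hint, Matrix.sum_apply]
    refine Finset.sum_congr rfl fun i _ => ?_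
    rw [Matrix.smul_apply, smul_eq_mul]
    rcases eq_or_lt_of_le (zero_le (a := P ({ω | θ₀ ω = i} ∩ {ω | θ₁ ω = j}))) with h0 | hpos
    · have hz : P ({ω | θ₀ ω = i} ∩ {ω | θ₁ ω = j}) = 0 := h0.symm
      have hcz : π i * p i j = 0 := by rw [← hjoint i j, hz, ENNReal.toReal_zero]
      rw [Measure.restrict_eq_zero.2 hz, integral_zero_measure, hcz, zero_mul]
    · have hc := congrArg (fun M => M c d) (hPmat' i j hpos)
      simp only [condSecondMoment, Matrix.of_apply] at hc
      have hne : (P ({ω | θ₀ ω = i} ∩ {ω | θ₁ ω = j})).toReal ≠ 0 :=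
        (ENNReal.toReal_pos hpos.ne' (measure_ne_top P _)).ne'
      rw [div_eq_iff hne] at hc
      rw [hc, hjoint i j]
      ring
  -- second moments of w and v on the event
  have hIww : ∀ c d, ∫ ω in {ω | θ₁ ω = j}, w ω c * w ω d ∂P = Wm c d * π j := by
    intro c d
    have hφ : Measurable (fun q : (Fin nw → ℝ) × (Fin m → ℝ) => q.1 c * q.1 d) :=
      ((measurable_pi_apply c).comp measurable_fst).mul
        ((measurable_pi_apply d).comp measurable_fst)
    have hind : IndepFun (fun ω => w ω c * w ω d) χ P := by
      have h := hindep.comp hφ hχfun_meas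
      rw [hχcomp'] at h
      exact h
    rw [hχint, IndepFun.integral_fun_mul_eq_mul_integral hind
      ((hw2 c).aestronglyMeasurable.mul (hw2 d).aestronglyMeasurable) hAESχ, hχ1, hPS, hWm]
    rfl
  have hIvv : ∀ c d, ∫ ω in {ω | θ₁ ω = j}, v ω c * v ω d ∂P = Vm c d * π j := by
    intro c d
    have hφ : Measurable (fun q : (Fin nw → ℝ) × (Fin m → ℝ) => q.2 c * q.2 d) :=
      ((measurable_pi_apply c).comp measurable_snd).mul
        ((measurable_pi_apply d).comp measurable_snd)
    have hind : IndepFun (fun ω => v ω c * v ω d) χ P := by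
      have h := hindep.comp hφ hχfun_meas
      rw [hχcomp'] at h
      exact h
    rw [hχint, IndepFun.integral_fun_mul_eq_mul_integral hind
      ((hv2 c).aestronglyMeasurable.mul (hv2 d).aestronglyMeasurable) hAESχ, hχ1, hPS, hVm]
    rfl
  -- cross moments vanish
  have hIew : ∀ c d, ∫ ω in {ω | θ₁ ω = j}, e ω c * w ω d ∂P = 0 := by
    intro c d
    rw [hχint]
    have hψ : Measurable (fun t : (Fin n → ℝ) × Fin (r+1) × Fin (r+1) => t.1 c * χfun t) :=
      ((measurable_pi_apply c).comp measurable_fst).mul hχfun_meas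
    have hφ : Measurable (fun q : (Fin nw → ℝ) × (Fin m → ℝ) => q.1 d) :=
      (measurable_pi_apply d).comp measurable_fst
    have hind : IndepFun (fun ω => w ω d) (fun ω => e ω c * χ ω) P := by
      have h := hindep.comp hφ hψ
      have h2 : ((fun t : (Fin n → ℝ) × Fin (r+1) × Fin (r+1) => t.1 c * χfun t)
          ∘ fun ω => (e ω, θ₀ ω, θ₁ ω)) = fun ω => e ω c * χ ω := by
        funext ω
        simp only [Function.comp_apply]
        rw [hχcomp ω]
      rw [h2] at h
      exact h
    have heq : (fun ω => e ω c * w ω d * χ ω) = fun ω => w ω d * (e ω c * χ ω) :=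
      funext fun ω => by ring
    calc ∫ ω, e ω c * w ω d * χ ω ∂P = ∫ ω, w ω d * (e ω c * χ ω) ∂P := by rw [heq]
      _ = (∫ ω, w ω d ∂P) * ∫ ω, e ω c * χ ω ∂P :=
        IndepFun.integral_fun_mul_eq_mul_integral hind (hw2 d).aestronglyMeasurable
          ((he2 c).aestronglyMeasurable.mul hAESχ)
      _ = 0 := by rw [hwmean d, zero_mul]
  have hIev : ∀ c d, ∫ ω in {ω | θ₁ ω = j}, e ω c * v ω d ∂P = 0 := by
    intro c d
    rw [hχint]
    have hψ : Measurable (fun t : (Fin n → ℝ) × Fin (r+1) × Fin (r+1) => t.1 c * χfun t) :=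
      ((measurable_pi_apply c).comp measurable_fst).mul hχfun_meas
    have hφ : Measurable (fun q : (Fin nw → ℝ) × (Fin m → ℝ) => q.2 d) :=
      (measurable_pi_apply d).comp measurable_snd
    have hind : IndepFun (fun ω => v ω d) (fun ω => e ω c * χ ω) P := by
      have h := hindep.comp hφ hψ
      have h2 : ((fun t : (Fin n → ℝ) × Fin (r+1) × Fin (r+1) => t.1 c * χfun t)
          ∘ fun ω => (e ω, θ₀ ω, θ₁ ω)) = fun ω => e ω c * χ ω := by
        funext ω
        simp only [Function.comp_apply]
        rw [hχcomp ω]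
      rw [h2] at h
      exact h
    have heq : (fun ω => e ω c * v ω d * χ ω) = fun ω => v ω d * (e ω c * χ ω) :=
      funext fun ω => by ring
    calc ∫ ω, e ω c * v ω d * χ ω ∂P = ∫ ω, v ω d * (e ω c * χ ω) ∂P := by rw [heq]
      _ = (∫ ω, v ω d ∂P) * ∫ ω, e ω c * χ ω ∂P :=
        IndepFun.integral_fun_mul_eq_mul_integral hind (hv2 d).aestronglyMeasurable
          ((he2 c).aestronglyMeasurable.mul hAESχ)
      _ = 0 := by rw [hvmean d, zero_mul]
  have hIwv : ∀ c d, ∫ ω in {ω | θ₁ ω = j}, w ω c * v ω d ∂P = 0 := by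
    intro c d
    rw [hχint]
    have hφ : Measurable (fun q : (Fin nw → ℝ) × (Fin m → ℝ) => q.1 c * q.2 d) :=
      ((measurable_pi_apply c).comp measurable_fst).mul
        ((measurable_pi_apply d).comp measurable_snd)
    have hind : IndepFun (fun ω => w ω c * v ω d) χ P := by
      have h := hindep.comp hφ hχfun_meas
      rw [hχcomp'] at h
      exact h
    have hwv' : IndepFun (fun ω => w ω c) (fun ω => v ω d) P :=
      hwv.comp (measurable_pi_apply c) (measurable_pi_apply d)
    rw [IndepFun.integral_fun_mul_eq_mul_integral hind
        ((hw2 c).aestronglyMeasurable.mul (hv2 d).aestronglyMeasurable) hAESχ,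
      IndepFun.integral_fun_mul_eq_mul_integral hwv' (hw2 c).aestronglyMeasurable (hv2 d).aestronglyMeasurable,
      hwmean c, zero_mul, zero_mul]
  have hIwe : ∀ c d, ∫ ω in {ω | θ₁ ω = j}, w ω c * e ω d ∂P = 0 := by
    intro c d
    have h : ∫ ω in {ω | θ₁ ω = j}, w ω c * e ω d ∂P
        = ∫ ω in {ω | θ₁ ω = j}, e ω d * w ω c ∂P :=
      setIntegral_congr_fun hSm fun ω _ => mul_comm _ _
    rw [h, hIew d c]
  have hIve : ∀ c d, ∫ ω in {ω | θ₁ ω = j}, v ω c * e ω d ∂P = 0 := by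
    intro c d
    have h : ∫ ω in {ω | θ₁ ω = j}, v ω c * e ω d ∂P
        = ∫ ω in {ω | θ₁ ω = j}, e ω d * v ω c ∂P :=
      setIntegral_congr_fun hSm fun ω _ => mul_comm _ _
    rw [h, hIev d c]
  have hIvw : ∀ c d, ∫ ω in {ω | θ₁ ω = j}, v ω c * w ω d ∂P = 0 := by
    intro c d
    have h : ∫ ω in {ω | θ₁ ω = j}, v ω c * w ω d ∂P
        = ∫ ω in {ω | θ₁ ω = j}, w ω d * v ω c ∂P :=
      setIntegral_congr_fun hSm fun ω _ => mul_comm _ _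
    rw [h, hIwv d c]
  -- the combined representation of e' on the event
  set Aj := F j * Abar with hAj
  set Bj := F j * Bbar with hBj
  set z : (Fin n ⊕ (Fin nw ⊕ Fin m)) → Ω → ℝ :=
    Sum.elim (fun c ω => e ω c) (Sum.elim (fun c ω => w ω c) (fun c ω => v ω c)) with hzdef
  set C : Fin n → (Fin n ⊕ (Fin nw ⊕ Fin m)) → ℝ :=
    fun a => Sum.elim (fun c => Aj a c) (Sum.elim (fun c => Bj a c) (fun c => -(X j a c)))
    with hCdef
  have hz2 : ∀ k, MemLp (z k) 2 P := by
    rintro (c | c | c)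
    exacts [he2 c, hw2 c, hv2 c]
  have hzint : ∀ k l, IntegrableOn (fun ω => z k ω * z l ω) {ω | θ₁ ω = j} P :=
    fun k l => (l2_mul_integrable (hz2 k) (hz2 l)).integrableOn
  have he'S : ∀ ω ∈ {ω | θ₁ ω = j}, ∀ a, e' ω a = ∑ k, C a k * z k ω := by
    intro ω hω a
    have hθ : θ₁ ω = j := hω
    rw [he' ω, hθ, Pi.sub_apply, Matrix.mulVec_add, Matrix.mulVec_mulVec,
      Matrix.mulVec_mulVec, ← hAj, ← hBj]
    simp only [Fintype.sum_sum_type, hCdef, hzdef, Sum.elim_inl, Sum.elim_inr,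
      Pi.add_apply, Matrix.mulVec, dotProduct, neg_mul]
    rw [Finset.sum_neg_distrib]
    ring
  -- the quadratic expansion
  have key : ∀ a b, ∫ ω in {ω | θ₁ ω = j}, e' ω a * e' ω b ∂P
      = ∑ i, π i * p i j * (Aj * Pmat i * Ajᵀ) a b
        + ((Bj * Wm * Bjᵀ) a b * π j + (X j * Vm * (X j)ᵀ) a b * π j) := by
    intro a b
    have h1 : ∫ ω in {ω | θ₁ ω = j}, e' ω a * e' ω b ∂P
        = ∫ ω in {ω | θ₁ ω = j}, (∑ k, C a k * z k ω) * (∑ l, C b l * z l ω) ∂P :=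
      setIntegral_congr_fun hSm fun ω hω => by rw [he'S ω hω a, he'S ω hω b]
    rw [h1, setIntegral_bilin _ _ _ hzint]
    simp only [Fintype.sum_sum_type, hCdef, hzdef, Sum.elim_inl, Sum.elim_inr]
    simp only [hIee, hIew, hIev, hIwe, hIww, hIwv, hIve, hIvw, hIvv,
      mul_zero, Finset.sum_const_zero, add_zero, zero_add]
    have hee : ∑ c, ∑ d, Aj a c * Aj b d * (∑ i, (π i * p i j) • Pmat i) c d
        = ∑ i, π i * p i j * (Aj * Pmat i * Ajᵀ) a b := by
      rw [quad_apply]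
      have : Aj * (∑ i, (π i * p i j) • Pmat i) * Ajᵀ
          = ∑ i, (π i * p i j) • (Aj * Pmat i * Ajᵀ) := by
        rw [Finset.mul_sum, Finset.sum_mul]
        exact Finset.sum_congr rfl fun i _ => by
          rw [mul_smul_comm, smul_mul_assoc]
      rw [this, Matrix.sum_apply]
      exact Finset.sum_congr rfl fun i _ => by rw [Matrix.smul_apply, smul_eq_mul]
    have hww : ∑ c, ∑ d, Bj a c * Bj b d * (Wm c d * π j) = (Bj * Wm * Bjᵀ) a b * π j := by
      rw [← quad_apply Bj Bj Wm a b, Finset.sum_mul]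
      refine Finset.sum_congr rfl fun c _ => ?_
      rw [Finset.sum_mul]
      exact Finset.sum_congr rfl fun d _ => by ring
    have hvv : ∑ c, ∑ d, -(X j a c) * -(X j b d) * (Vm c d * π j)
        = (X j * Vm * (X j)ᵀ) a b * π j := by
      rw [← quad_apply (X j) (X j) Vm a b, Finset.sum_mul]
      refine Finset.sum_congr rfl fun c _ => ?_
      rw [Finset.sum_mul]
      exact Finset.sum_congr rfl fun d _ => by ring
    rw [hee, hww, hvv]
  -- finish
  have hFQ : ∀ i, F j * (Abar * Pmat i * Abarᵀ + Bbar * Wm * Bbarᵀ) * (F j)ᵀ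
      = Aj * Pmat i * Ajᵀ + Bj * Wm * Bjᵀ := by
    intro i
    rw [hAj, hBj]
    simp only [Matrix.mul_add, Matrix.add_mul, Matrix.transpose_mul, Matrix.mul_assoc]
  ext a b
  simp only [condSecondMoment, Matrix.of_apply]
  rw [key a b, hPS]
  simp only [hFQ, Matrix.sum_apply, Matrix.smul_apply, Matrix.add_apply, smul_eq_mul]
  rw [div_eq_iff hπj.ne', Finset.sum_mul]
  have hterm : ∀ i : Fin (r+1),
      p i j * (π i / π j) * ((Aj * Pmat i * Ajᵀ) a b + (Bj * Wm * Bjᵀ) a b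
        + (X j * Vm * (X j)ᵀ) a b) * π j
      = π i * p i j * (Aj * Pmat i * Ajᵀ) a b
        + π i * p i j * ((Bj * Wm * Bjᵀ) a b + (X j * Vm * (X j)ᵀ) a b) := by
    intro i
    field_simp
    ring
  simp_rw [hterm]
  rw [Finset.sum_add_distrib, ← Finset.sum_mul, hstat j]
  ring
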